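/- arXiv:math/0407107 — 7 statements merged into one kernel-verified Lean document; each statement's English description precedes it below -/
import Mathlib

section
/- Let A be a real symmetric n×n matrix with least eigenvalue λ_n. Then λ_n equals the minimum over all vectors v_1,...,v_n ∈ ℝ^n (not all zero) of (Σ_{i,j} A_{i,j}⟨v_i,v_j⟩) / (Σ_i ‖v_i‖²). -/
private lemma sum_swap3 {M : Type*} [AddCommMonoid M] {ι : Type*} [Fintype ι]
    (f : ι → ι → ι → M) :
    ∑ i, ∑ j, ∑ a, f i j a = ∑ a, ∑ i, ∑ j, f i j a :=
  calc ∑ i, ∑ j, ∑ a, f i j a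
      = ∑ i, ∑ a, ∑ j, f i j a :=
        Finset.sum_congr rfl fun _ _ => Finset.sum_comm
    _ = ∑ a, ∑ i, ∑ j, f i j a := Finset.sum_comm

open Finset in
private lemma quad_eq_sum_eigen (n : ℕ) (A : Matrix (Fin n) (Fin n) ℝ)
    (hA : A.IsHermitian) (x : Fin n → ℝ) :
    ∑ i, ∑ j, A i j * (x i * x j)
      = ∑ a, hA.eigenvalues a *
          (hA.eigenvectorBasis.repr ((WithLp.equiv 2 _).symm x) a) ^ 2 := by
  classical
  set B := hA.eigenvectorBasis with hB
  set x' : EuclideanSpace ℝ (Fin n) := (WithLp.equiv 2 _).symm x with hx'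
  have hc : ∀ a, B.repr x' a = ∑ k, B a k * x k := by
    intro a
    rw [B.repr_apply_apply x' a]
    simp [PiLp.inner_apply, RCLike.inner_apply, conj_trivial, hx']
    exact Finset.sum_congr rfl fun _ _ => mul_comm _ _
  have hAkl : ∀ k l, A k l = ∑ a, hA.eigenvalues a * (B a k * B a l) := by
    intro k l
    have h := congrFun (congrFun hA.spectral_theorem k) l
    simp only [Unitary.conjStarAlgAut_apply, Matrix.mul_apply, Matrix.diagonal_apply, Function.comp_apply,
      Matrix.star_apply, hA.eigenvectorUnitary_apply, mul_ite, mul_zero, ite_mul, zero_mul,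
      Finset.sum_ite_eq, Finset.sum_ite_eq', Finset.mem_univ, if_true, star_trivial, RCLike.ofReal_real_eq_id,
      id_eq] at h
    rw [h]
    refine Finset.sum_congr rfl fun a _ => ?_
    change hA.eigenvectorBasis a k * hA.eigenvalues a * hA.eigenvectorBasis a l
      = hA.eigenvalues a * (hA.eigenvectorBasis a k * hA.eigenvectorBasis a l)
    ring
  calc ∑ i, ∑ j, A i j * (x i * x j)
      = ∑ i, ∑ j, ∑ a, hA.eigenvalues a * ((B a i * x i) * (B a j * x j)) := by
        refine Finset.sum_congr rfl fun i _ => Finset.sum_congr rfl fun j _ => ?_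
        rw [hAkl i j, Finset.sum_mul]
        exact Finset.sum_congr rfl fun a _ => by ring
    _ = ∑ a, ∑ i, ∑ j, hA.eigenvalues a * ((B a i * x i) * (B a j * x j)) := sum_swap3 _
    _ = ∑ a, hA.eigenvalues a * (B.repr x' a) ^ 2 := by
        refine Finset.sum_congr rfl fun a _ => ?_
        have hsq : (B.repr x' a) ^ 2 = ∑ i, ∑ j, (B a i * x i) * (B a j * x j) := by
          rw [hc a, sq, Finset.sum_mul_sum]
        rw [hsq, Finset.mul_sum]
        exact Finset.sum_congr rfl fun i _ => by rw [Finset.mul_sum]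

open Finset in
private lemma parseval_sq (n : ℕ) (A : Matrix (Fin n) (Fin n) ℝ)
    (hA : A.IsHermitian) (x : Fin n → ℝ) :
    ∑ k, (x k) ^ 2
      = ∑ a, (hA.eigenvectorBasis.repr ((WithLp.equiv 2 _).symm x) a) ^ 2 := by
  classical
  set B := hA.eigenvectorBasis
  set x' : EuclideanSpace ℝ (Fin n) := (WithLp.equiv 2 _).symm x
  have h := B.repr.inner_map_map x' x'
  simp only [PiLp.inner_apply, RCLike.inner_apply, conj_trivial] at h
  simpa [pow_two, x'] using h.symm

open Finset in
theorem least_eigenvalue_eq_min_gram_ratio (n : ℕ) (hn : 0 < n)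
    (A : Matrix (Fin n) (Fin n) ℝ) (hA : A.IsHermitian) :
    IsLeast {r : ℝ | ∃ v : Fin n → (Fin n → ℝ), v ≠ 0 ∧
        r = (∑ i, ∑ j, A i j * ∑ k, v i k * v j k) / (∑ i, ∑ k, (v i k) ^ 2)}
      (⨅ i, hA.eigenvalues i) := by
  classical
  haveI : Nonempty (Fin n) := ⟨⟨0, hn⟩⟩
  set μ := ⨅ i, hA.eigenvalues i with hμ
  have hbdd : BddBelow (Set.range hA.eigenvalues) := Set.Finite.bddBelow (Set.finite_range _)
  have hμ_le : ∀ i, μ ≤ hA.eigenvalues i := fun i => ciInf_le hbdd i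
  have key : ∀ x : Fin n → ℝ, μ * ∑ k, (x k) ^ 2 ≤ ∑ i, ∑ j, A i j * (x i * x j) := by
    intro x
    rw [quad_eq_sum_eigen n A hA x, parseval_sq n A hA x, Finset.mul_sum]
    exact Finset.sum_le_sum fun a _ =>
      mul_le_mul_of_nonneg_right (hμ_le a) (sq_nonneg _)
  constructor
  · -- membership: eigenvector of minimal eigenvalue
    obtain ⟨i0, hi0⟩ := Finite.exists_min hA.eigenvalues
    have hμ0 : μ = hA.eigenvalues i0 :=
      le_antisymm (hμ_le i0) (le_ciInf hi0)
    set u : Fin n → ℝ := ⇑(hA.eigenvectorBasis i0) with hu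
    have hu_ne : u ≠ 0 := by
      have h := hA.eigenvectorBasis.orthonormal.ne_zero i0
      intro hcon
      exact h (by ext k; exact congrFun hcon k)
    have hnorm : ∑ k, u k * u k = 1 := by
      have h := orthonormal_iff_ite.mp hA.eigenvectorBasis.orthonormal i0 i0
      simp only [PiLp.inner_apply, RCLike.inner_apply, conj_trivial, if_true] at h
      simpa [u] using h
    have hquad : ∑ i, ∑ j, A i j * (u i * u j) = μ := by
      have hAv : ∀ i, ∑ j, A i j * u j = hA.eigenvalues i0 * u i := by
        intro i
        have h := congrFun (hA.mulVec_eigenvectorBasis i0) i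
        simpa [Matrix.mulVec, dotProduct, Pi.smul_apply, smul_eq_mul] using h
      calc ∑ i, ∑ j, A i j * (u i * u j)
          = ∑ i, u i * ∑ j, A i j * u j := by
            refine Finset.sum_congr rfl fun i _ => ?_
            rw [Finset.mul_sum]
            exact Finset.sum_congr rfl fun j _ => by ring
        _ = hA.eigenvalues i0 * ∑ i, u i * u i := by
            simp_rw [hAv]
            rw [Finset.mul_sum]
            exact Finset.sum_congr rfl fun i _ => by ring
        _ = μ := by rw [hnorm, hμ0]; ring
    refine ⟨fun i k => u i * u k, ?_, ?_⟩
    · intro h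
      obtain ⟨k0, hk0⟩ := Function.ne_iff.mp hu_ne
      simp only [Pi.zero_apply] at hk0
      have h0 : u k0 * u k0 = 0 := by
        have := congrFun (congrFun h k0) k0
        simpa using this
      exact hk0 (mul_self_eq_zero.mp h0)
    · have hnum : (∑ i, ∑ j, A i j * ∑ k, (u i * u k) * (u j * u k)) = μ := by
        have h1 : ∀ i j : Fin n, (∑ k, (u i * u k) * (u j * u k)) = (u i * u j) * 1 := by
          intro i j
          rw [← hnorm, Finset.mul_sum]
          exact Finset.sum_congr rfl fun k _ => by ring
        simp_rw [h1, mul_one]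
        exact hquad
      have hden : (∑ i, ∑ k, ((u i * u k)) ^ 2) = 1 := by
        have h1 : ∀ i : Fin n, ∑ k, (u i * u k) ^ 2 = (u i * u i) * 1 := by
          intro i
          rw [← hnorm, Finset.mul_sum]
          exact Finset.sum_congr rfl fun k _ => by ring
        simp_rw [h1, mul_one]
        exact hnorm
      rw [hnum, hden, div_one]
  · -- lower bound
    rintro r ⟨v, hv, rfl⟩
    set D := ∑ i, ∑ k, (v i k) ^ 2 with hD
    have hD_pos : 0 < D := by
      obtain ⟨i0, hi0⟩ := Function.ne_iff.mp hv
      obtain ⟨k0, hk0⟩ := Function.ne_iff.mp hi0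
      simp only [Pi.zero_apply] at hk0
      have h1 : 0 < (v i0 k0) ^ 2 := by positivity
      have h2 : 0 < ∑ k, (v i0 k) ^ 2 :=
        lt_of_lt_of_le h1 (Finset.single_le_sum (f := fun k => (v i0 k) ^ 2)
          (fun k _ => sq_nonneg _) (Finset.mem_univ k0))
      exact lt_of_lt_of_le h2 (Finset.single_le_sum (f := fun i => ∑ k, (v i k) ^ 2)
        (fun i _ => Finset.sum_nonneg fun k _ => sq_nonneg _) (Finset.mem_univ i0))
    rw [le_div_iff₀ hD_pos]
    have hswap : (∑ i, ∑ j, A i j * ∑ k, v i k * v j k)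
        = ∑ k, ∑ i, ∑ j, A i j * (v i k * v j k) := by
      simp_rw [Finset.mul_sum]
      exact sum_swap3 _
    have hDswap : D = ∑ k, ∑ i, (v i k) ^ 2 := Finset.sum_comm
    rw [hswap, hDswap, Finset.mul_sum]
    exact Finset.sum_le_sum fun k _ => key (fun i => v i k)
end

section
/- Hoffman's bound: for a graph G with adjacency matrix A having largest eigenvalue λ_1 and least eigenvalue λ_n, and at least one edge, the chromatic number satisfies χ(G) ≥ 1 − λ_1/λ_n. -/
open Matrix in
/-- Rayleigh-type lower bound: the least eigenvalue bounds the quadratic form from below. -/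
lemma hoffman_rayleigh_aux {n : ℕ} [Nonempty (Fin n)] {A : Matrix (Fin n) (Fin n) ℝ}
    (hA : A.IsHermitian) (u : Fin n → ℝ) :
    (⨅ i, hA.eigenvalues i) * (u ⬝ᵥ u) ≤ u ⬝ᵥ (A *ᵥ u) := by
  classical
  set U : Matrix (Fin n) (Fin n) ℝ := (hA.eigenvectorUnitary : Matrix (Fin n) (Fin n) ℝ) with hUdef
  have hU1 : U * star U = 1 := (Matrix.mem_unitaryGroup_iff).mp hA.eigenvectorUnitary.2
  have hstar : star U = Uᵀ := by
    ext i j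
    simp [Matrix.conjTranspose_apply]
  set w : Fin n → ℝ := u ᵥ* U with hw
  have hww : w ⬝ᵥ w = u ⬝ᵥ u := by
    calc w ⬝ᵥ w = w ⬝ᵥ (Uᵀ *ᵥ u) := by rw [mulVec_transpose]
    _ = (w ᵥ* Uᵀ) ⬝ᵥ u := by rw [dotProduct_mulVec]
    _ = (u ᵥ* (U * Uᵀ)) ⬝ᵥ u := by rw [hw, vecMul_vecMul]
    _ = u ⬝ᵥ u := by rw [← hstar, hU1, vecMul_one]
  have hD : Matrix.diagonal (RCLike.ofReal ∘ hA.eigenvalues) = Matrix.diagonal hA.eigenvalues := by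
    congr 1
  have hq : u ⬝ᵥ (A *ᵥ u) = w ⬝ᵥ (Matrix.diagonal hA.eigenvalues *ᵥ w) := by
    conv_lhs => rw [hA.spectral_theorem, Unitary.conjStarAlgAut_apply]
    rw [hD, ← hUdef, ← Matrix.mulVec_mulVec, ← Matrix.mulVec_mulVec, dotProduct_mulVec,
      hstar, mulVec_transpose]
  rw [hq, ← hww]
  have hbdd : BddBelow (Set.range hA.eigenvalues) := Set.Finite.bddBelow (Set.finite_range _)
  simp only [Matrix.mulVec_diagonal, dotProduct, Finset.mul_sum]
  apply Finset.sum_le_sum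
  intro i _
  have h1 : (⨅ j, hA.eigenvalues j) ≤ hA.eigenvalues i := ciInf_le hbdd i
  nlinarith [mul_self_nonneg (w i)]

open Finset in
theorem hoffman_bound (n : ℕ) (G : SimpleGraph (Fin n)) [DecidableRel G.Adj]
    (hE : ∃ i j, G.Adj i j)
    (hA : (G.adjMatrix ℝ).IsHermitian) :
    (G.chromaticNumber.toNat : ℝ) ≥
      1 - (⨆ i, hA.eigenvalues i) / (⨅ i, hA.eigenvalues i) := by
  open Matrix in
  classical
  obtain ⟨a, b, hab⟩ := hE
  haveI : Nonempty (Fin n) := ⟨a⟩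
  set A : Matrix (Fin n) (Fin n) ℝ := G.adjMatrix ℝ with hAdef
  set lmin : ℝ := ⨅ i, hA.eigenvalues i with hlmin
  set lmax : ℝ := ⨆ i, hA.eigenvalues i with hlmax
  -- least eigenvalue is negative
  have hmin_neg : lmin < 0 := by
    have hne : a ≠ b := G.ne_of_adj hab
    set u : Fin n → ℝ := Pi.single a 1 - Pi.single b 1 with hu
    have huu : u ⬝ᵥ u = 2 := by
      simp [hu, sub_dotProduct, dotProduct_sub, single_dotProduct,
        dotProduct_single, Pi.single_apply, hne, hne.symm]
      norm_num
    have hq : u ⬝ᵥ (A *ᵥ u) = -2 := by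
      have h1 : A *ᵥ u = A *ᵥ Pi.single a 1 - A *ᵥ Pi.single b 1 := by
        rw [hu, Matrix.mulVec_sub]
      rw [h1, hu, sub_dotProduct, dotProduct_sub, dotProduct_sub]
      simp [Matrix.mulVec_single, single_dotProduct, hAdef,
        SimpleGraph.adjMatrix_apply, hab, G.adj_symm hab, hne]
      norm_num
    have hr := hoffman_rayleigh_aux hA u
    rw [huu, hq, ← hlmin] at hr
    linarith
  -- maximal eigenvalue and its eigenvector
  have hbddA : BddAbove (Set.range hA.eigenvalues) := Set.Finite.bddAbove (Set.finite_range _)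
  obtain ⟨i0, hi0⟩ := Finite.exists_max hA.eigenvalues
  have hmax_eq : lmax = hA.eigenvalues i0 :=
    le_antisymm (ciSup_le hi0) (le_ciSup hbddA i0)
  set v : Fin n → ℝ := ⇑(hA.eigenvectorBasis i0) with hv
  have hAv : A *ᵥ v = lmax • v := by
    rw [hmax_eq]; exact hA.mulVec_eigenvectorBasis i0
  have hvne : v ≠ 0 := by
    have h0 := hA.eigenvectorBasis.orthonormal.ne_zero i0
    intro h
    apply h0
    ext j
    exact congrFun h j
  set N : ℝ := v ⬝ᵥ v with hN
  have hNnn : 0 ≤ N := Fintype.sum_nonneg fun i => mul_self_nonneg (v i)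
  have hNpos : 0 < N := by
    rcases lt_or_eq_of_le hNnn with h | h
    · exact h
    · exact absurd (dotProduct_self_eq_zero.mp h.symm) hvne
  -- the coloring
  set k : ℕ := G.chromaticNumber.toNat with hk
  have hcol : G.Colorable k := G.colorable_chromaticNumber_of_fintype
  obtain ⟨C⟩ := hcol
  have hkpos : 0 < k := Fin.pos_iff_nonempty.mpr ⟨C a⟩
  -- color class vectors
  set y : Fin k → Fin n → ℝ := fun c j => if C j = c then v j else 0 with hy
  have hyv : ∀ c, y c ⬝ᵥ v = y c ⬝ᵥ y c := by
    intro c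
    apply Finset.sum_congr rfl
    intro j _
    by_cases h : C j = c <;> simp [hy, h]
  have hyq : ∀ c, y c ⬝ᵥ (A *ᵥ y c) = 0 := by
    intro c
    apply Finset.sum_eq_zero
    intro i _
    simp only [Matrix.mulVec, dotProduct]
    rw [Finset.mul_sum]
    apply Finset.sum_eq_zero
    intro j _
    by_cases hi : C i = c
    · by_cases hj : C j = c
      · have hnadj : ¬ G.Adj i j := by
          intro hadj
          exact C.valid hadj (hi.trans hj.symm)
        simp [hy, hAdef, SimpleGraph.adjMatrix_apply, hnadj]
      · simp [hy, hj]
    · simp [hy, hi]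
  have hysum : ∑ c : Fin k, (y c ⬝ᵥ y c) = N := by
    rw [hN]
    simp only [dotProduct]
    rw [Finset.sum_comm]
    apply Finset.sum_congr rfl
    intro j _
    have h1 : ∀ c : Fin k, y c j * y c j = if C j = c then v j * v j else 0 := by
      intro c
      by_cases h : C j = c <;> simp [hy, h]
    simp only [h1]
    rw [Finset.sum_ite_eq]
    simp
  -- per-color inequality
  have hkey : ∀ c : Fin k,
      lmin * ((k : ℝ) ^ 2 * (y c ⬝ᵥ y c) - 2 * k * (y c ⬝ᵥ y c) + N)
        ≤ lmax * (N - 2 * k * (y c ⬝ᵥ y c)) := by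
    intro c
    set x : Fin n → ℝ := (k : ℝ) • y c - v with hx
    have h1 : y c ⬝ᵥ (A *ᵥ v) = lmax * (y c ⬝ᵥ y c) := by
      rw [hAv, dotProduct_smul, smul_eq_mul, hyv c]
    have hsym : v ⬝ᵥ (A *ᵥ y c) = lmax * (y c ⬝ᵥ y c) := by
      rw [Matrix.dotProduct_mulVec v A (y c), ← Matrix.mulVec_transpose]
      have hAt : Aᵀ = A := by
        have h2 := hA
        rwa [Matrix.IsHermitian, Matrix.conjTranspose_eq_transpose_of_trivial] at h2
      rw [hAt, dotProduct_comm, h1]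
    have h3 : v ⬝ᵥ (A *ᵥ v) = lmax * N := by
      rw [hAv, dotProduct_smul, smul_eq_mul, hN]
    have hvy : v ⬝ᵥ y c = y c ⬝ᵥ y c := by rw [dotProduct_comm, hyv c]
    have hqx : x ⬝ᵥ (A *ᵥ x) = lmax * (N - 2 * k * (y c ⬝ᵥ y c)) := by
      rw [hx]
      simp only [Matrix.mulVec_sub, Matrix.mulVec_smul, sub_dotProduct,
        dotProduct_sub, smul_dotProduct, dotProduct_smul, smul_eq_mul]
      rw [hyq c, h1, hsym, h3]
      ring
    have hxx : x ⬝ᵥ x = (k : ℝ) ^ 2 * (y c ⬝ᵥ y c) - 2 * k * (y c ⬝ᵥ y c) + N := by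
      rw [hx]
      simp only [sub_dotProduct, dotProduct_sub, smul_dotProduct,
        dotProduct_smul, smul_eq_mul]
      rw [hyv c, hvy, ← hN]
      ring
    have hr := hoffman_rayleigh_aux hA x
    rw [hqx, hxx, ← hlmin] at hr
    exact hr
  -- sum over colors
  have hsum := Finset.sum_le_sum (fun c (_ : c ∈ Finset.univ) => hkey c)
  have hL : ∑ c : Fin k, lmin * ((k : ℝ) ^ 2 * (y c ⬝ᵥ y c) - 2 * k * (y c ⬝ᵥ y c) + N)
      = lmin * ((k : ℝ) ^ 2 * N - 2 * k * N + k * N) := by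
    rw [← Finset.mul_sum]
    congr 1
    rw [Finset.sum_add_distrib, Finset.sum_sub_distrib, ← Finset.mul_sum, ← Finset.mul_sum,
      hysum, Finset.sum_const, Finset.card_univ, Fintype.card_fin, nsmul_eq_mul]
  have hR : ∑ c : Fin k, lmax * (N - 2 * k * (y c ⬝ᵥ y c))
      = lmax * ((k : ℝ) * N - 2 * k * N) := by
    rw [← Finset.mul_sum]
    congr 1
    rw [Finset.sum_sub_distrib, ← Finset.mul_sum, hysum, Finset.sum_const, Finset.card_univ,
      Fintype.card_fin, nsmul_eq_mul]
  rw [hL, hR] at hsum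
  -- conclude
  have hkR : (0 : ℝ) < (k : ℝ) := Nat.cast_pos.mpr hkpos
  have hkN : (0 : ℝ) < (k : ℝ) * N := mul_pos hkR hNpos
  have h2 : (((k : ℝ) - 1) * lmin) * ((k : ℝ) * N) ≤ (-lmax) * ((k : ℝ) * N) := by
    nlinarith [hsum]
  have hdiv : ((k : ℝ) - 1) * lmin ≤ -lmax := le_of_mul_le_mul_right h2 hkN
  have h4 : -lmax / lmin ≤ (k : ℝ) - 1 := by
    rw [div_le_iff_of_neg hmin_neg]
    linarith
  have h5 : -lmax / lmin = -(lmax / lmin) := neg_div _ _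
  rw [ge_iff_le]
  linarith
end

section
/- Let G be a graph with weighted adjacency matrix W (real symmetric, supported on edges), with largest eigenvalue λ_1 and least eigenvalue λ_n. Suppose V(G) is partitioned into k ≥ 2 clusters C_1,...,C_k such that for each t the largest eigenvalue of the principal submatrix W[C_t] is at most λ, where λ < λ_1. Then k ≥ (λ_1 − λ_n)/(λ − λ_n). -/
open Matrix

open Finset in
private lemma quadform_le_of_eigenvalues_le {m : Type*} [Fintype m] [DecidableEq m]
    {A : Matrix m m ℝ} (hA : A.IsHermitian) {c : ℝ} (h : ∀ i, hA.eigenvalues i ≤ c)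
    (v : m → ℝ) : v ⬝ᵥ (A *ᵥ v) ≤ c * (v ⬝ᵥ v) := by
  set U : Matrix m m ℝ := (hA.eigenvectorUnitary : Matrix m m ℝ) with hU
  have hUU : U * Uᴴ = 1 := by
    rw [← Matrix.star_eq_conjTranspose]
    exact (Matrix.mem_unitaryGroup_iff).mp hA.eigenvectorUnitary.2
  have hP : (Matrix.diagonal (fun i => c - hA.eigenvalues i)).PosSemidef :=
    Matrix.PosSemidef.diagonal (fun i => by simpa using sub_nonneg.mpr (h i))
  have hps : (c • (1 : Matrix m m ℝ) - A).PosSemidef := by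
    have := hP.mul_mul_conjTranspose_same U
    have heq : U * Matrix.diagonal (fun i => c - hA.eigenvalues i) * Uᴴ
        = c • (1 : Matrix m m ℝ) - A := by
      have hsd : Matrix.diagonal (fun i => c - hA.eigenvalues i)
          = c • (1 : Matrix m m ℝ) - Matrix.diagonal (fun i => hA.eigenvalues i) := by
        ext i j
        by_cases hij : i = j <;>
          simp [Matrix.diagonal, hij, Matrix.one_apply]
      have hspec : A = U * Matrix.diagonal (fun i => hA.eigenvalues i) * Uᴴ := by
        have := hA.spectral_theorem
        rwa [show (RCLike.ofReal ∘ hA.eigenvalues : m → ℝ) = fun i => hA.eigenvalues i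
            from funext fun i => by simp, Unitary.conjStarAlgAut_apply, Matrix.star_eq_conjTranspose, ← hU] at this
      rw [hsd, Matrix.mul_sub, Matrix.sub_mul, Matrix.mul_smul, Matrix.mul_one,
        Matrix.smul_mul, hUU, ← hspec]
    rwa [heq] at this
  have h0 := hps.dotProduct_mulVec_nonneg v
  rw [show star v = v from star_trivial v] at h0
  rw [Matrix.sub_mulVec, Matrix.smul_mulVec, Matrix.one_mulVec,
    dotProduct_sub, dotProduct_smul] at h0
  simp only [smul_eq_mul] at h0
  linarith

open Finset in
private lemma quadform_ge_of_le_eigenvalues {m : Type*} [Fintype m] [DecidableEq m]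
    {A : Matrix m m ℝ} (hA : A.IsHermitian) {c : ℝ} (h : ∀ i, c ≤ hA.eigenvalues i)
    (v : m → ℝ) : c * (v ⬝ᵥ v) ≤ v ⬝ᵥ (A *ᵥ v) := by
  set U : Matrix m m ℝ := (hA.eigenvectorUnitary : Matrix m m ℝ) with hU
  have hUU : U * Uᴴ = 1 := by
    rw [← Matrix.star_eq_conjTranspose]
    exact (Matrix.mem_unitaryGroup_iff).mp hA.eigenvectorUnitary.2
  have hP : (Matrix.diagonal (fun i => hA.eigenvalues i - c)).PosSemidef :=
    Matrix.PosSemidef.diagonal (fun i => by simpa using sub_nonneg.mpr (h i))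
  have hps : (A - c • (1 : Matrix m m ℝ)).PosSemidef := by
    have := hP.mul_mul_conjTranspose_same U
    have heq : U * Matrix.diagonal (fun i => hA.eigenvalues i - c) * Uᴴ
        = A - c • (1 : Matrix m m ℝ) := by
      have hsd : Matrix.diagonal (fun i => hA.eigenvalues i - c)
          = Matrix.diagonal (fun i => hA.eigenvalues i) - c • (1 : Matrix m m ℝ) := by
        ext i j
        by_cases hij : i = j <;>
          simp [Matrix.diagonal, hij, Matrix.one_apply]
      have hspec : A = U * Matrix.diagonal (fun i => hA.eigenvalues i) * Uᴴ := by
        have := hA.spectral_theorem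
        rwa [show (RCLike.ofReal ∘ hA.eigenvalues : m → ℝ) = fun i => hA.eigenvalues i
            from funext fun i => by simp, Unitary.conjStarAlgAut_apply, Matrix.star_eq_conjTranspose, ← hU] at this
      rw [hsd, Matrix.mul_sub, Matrix.sub_mul, Matrix.mul_smul, Matrix.mul_one,
        Matrix.smul_mul, hUU, ← hspec]
    rwa [heq] at this
  have h0 := hps.dotProduct_mulVec_nonneg v
  rw [show star v = v from star_trivial v] at h0
  rw [Matrix.sub_mulVec, Matrix.smul_mulVec, Matrix.one_mulVec,
    dotProduct_sub, dotProduct_smul] at h0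
  simp only [smul_eq_mul] at h0
  linarith

open Finset in
theorem lambda_clustering_bound (n k : ℕ) (hk : 2 ≤ k)
    (G : SimpleGraph (Fin n))
    (W : Matrix (Fin n) (Fin n) ℝ) (hW : W.IsHermitian)
    (hsupp : ∀ i j, ¬ G.Adj i j → W i j = 0)
    (lam : ℝ) (φ : Fin n → Fin k)
    (hlo : ⨅ i, hW.eigenvalues i < lam) (hhi : lam < ⨆ i, hW.eigenvalues i)
    (hclust : ∀ t : Fin k,
      ∀ h : (W.submatrix ((↑) : {i // φ i = t} → Fin n)
              ((↑) : {i // φ i = t} → Fin n)).IsHermitian,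
        ∀ s, h.eigenvalues s ≤ lam) :
    (k : ℝ) ≥ ((⨆ i, hW.eigenvalues i) - ⨅ i, hW.eigenvalues i) /
      (lam - ⨅ i, hW.eigenvalues i) := by
  rcases Nat.eq_zero_or_pos n with hn | hn
  · exfalso
    subst hn
    rw [Real.iSup_of_isEmpty] at hhi
    rw [Real.iInf_of_isEmpty] at hlo
    linarith
  haveI : Nonempty (Fin n) := ⟨⟨0, hn⟩⟩
  set μ := ⨅ i, hW.eigenvalues i with hμ
  set Λ := ⨆ i, hW.eigenvalues i with hΛ
  -- max eigenvector
  obtain ⟨i₀, hi₀⟩ : ∃ i, hW.eigenvalues i = Λ := exists_eq_ciSup_of_finite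
  set x : Fin n → ℝ := ⇑(hW.eigenvectorBasis i₀) with hxdef
  have hWx : W *ᵥ x = Λ • x := by
    rw [hxdef, hW.mulVec_eigenvectorBasis i₀, hi₀]
  have hx1 : x ⬝ᵥ x = 1 := by
    have hnorm : ‖hW.eigenvectorBasis i₀‖ = 1 := hW.eigenvectorBasis.orthonormal.1 i₀
    have hinner : (inner ℝ (hW.eigenvectorBasis i₀) (hW.eigenvectorBasis i₀) : ℝ) = 1 := by
      rw [real_inner_self_eq_norm_mul_norm, hnorm]; ring
    rw [← hinner, PiLp.inner_apply]
    simp only [dotProduct, RCLike.inner_apply, conj_trivial]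
    rfl
  -- Rayleigh lower bound
  have hμle : ∀ i, μ ≤ hW.eigenvalues i := fun i =>
    ciInf_le (Set.Finite.bddBelow (Set.finite_range _)) i
  have hRay : ∀ v : Fin n → ℝ, μ * (v ⬝ᵥ v) ≤ v ⬝ᵥ (W *ᵥ v) := fun v =>
    quadform_ge_of_le_eigenvalues hW hμle v
  -- clusters
  set xt : Fin k → Fin n → ℝ := fun t i => if φ i = t then x i else 0 with hxt
  set a : Fin k → ℝ := fun t => xt t ⬝ᵥ xt t with ha
  set q : Fin k → ℝ := fun t => xt t ⬝ᵥ (W *ᵥ xt t) with hq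
  have key : ∀ (t : Fin k) (f : Fin n → ℝ),
      ∑ s : {i // φ i = t}, f s.val = ∑ i, if φ i = t then f i else 0 := by
    intro t f
    rw [← Finset.sum_filter]
    exact (Finset.sum_subtype _ (by simp) f).symm
  have hxtx : ∀ t, xt t ⬝ᵥ x = a t := by
    intro t
    apply Finset.sum_congr rfl
    intro i _
    by_cases hi : φ i = t <;> simp [hxt, hi]
  have hasum : ∑ t, a t = 1 := by
    have ha' : ∀ t, a t = ∑ i, if φ i = t then x i * x i else 0 := by
      intro t
      show xt t ⬝ᵥ xt t = _
      apply Finset.sum_congr rfl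
      intro i _
      by_cases hi : φ i = t <;> simp [hxt, hi]
    have h2 : ∑ t, a t = ∑ i, x i * x i := by
      rw [Finset.sum_congr rfl (fun t _ => ha' t), Finset.sum_comm]
      exact Finset.sum_congr rfl (fun i _ => by simp)
    rw [h2]
    simpa [dotProduct] using hx1
  -- cluster quadratic form bound
  have hclustq : ∀ t, q t ≤ lam * a t := by
    intro t
    have hBh : (W.submatrix ((↑) : {i // φ i = t} → Fin n)
        ((↑) : {i // φ i = t} → Fin n)).IsHermitian := hW.submatrix _
    have hmain := quadform_le_of_eigenvalues_le hBh (hclust t hBh)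
      (fun s : {i // φ i = t} => x s.val)
    have huu : (fun s : {i // φ i = t} => x s.val) ⬝ᵥ (fun s => x s.val) = a t := by
      show (∑ s : {i // φ i = t}, x s.val * x s.val) = a t
      rw [key t (fun i => x i * x i)]
      apply Finset.sum_congr rfl
      intro i _
      by_cases hi : φ i = t <;> simp [hxt, hi]
    have huBu : (fun s : {i // φ i = t} => x s.val) ⬝ᵥ
        ((W.submatrix ((↑) : {i // φ i = t} → Fin n) ((↑) : {i // φ i = t} → Fin n)) *ᵥ
          (fun s => x s.val)) = q t := by
      show (∑ s : {i // φ i = t}, x s.val * ∑ s' : {i // φ i = t}, W s.val s'.val * x s'.val)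
        = q t
      rw [key t (fun i => x i * ∑ s' : {i // φ i = t}, W i s'.val * x s'.val)]
      simp only [hq, dotProduct, Matrix.mulVec]
      apply Finset.sum_congr rfl
      intro i _
      by_cases hi : φ i = t
      · simp only [hi, if_true, hxt]
        rw [key t (fun j => W i j * x j)]
        congr 1
        apply Finset.sum_congr rfl
        intro j _
        by_cases hj : φ j = t <;> simp [hj]
      · simp [hxt, hi]
    rw [huu, huBu] at hmain
    exact hmain
  -- main per-cluster inequality
  have hK2 : (2 : ℝ) ≤ (k : ℝ) := by exact_mod_cast hk
  have hWsymm : ∀ v w : Fin n → ℝ, v ⬝ᵥ (W *ᵥ w) = w ⬝ᵥ (W *ᵥ v) := by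
    intro v w
    have hT : Wᵀ = W := by
      ext i j
      simpa [Matrix.conjTranspose_apply] using congrFun (congrFun hW i) j
    rw [Matrix.dotProduct_mulVec, ← Matrix.mulVec_transpose, hT]
    exact dotProduct_comm _ _
  have haeq : ∀ t, xt t ⬝ᵥ xt t = a t := fun _ => rfl
  have hqeq : ∀ t, xt t ⬝ᵥ (W *ᵥ xt t) = q t := fun _ => rfl
  have hper : ∀ t, μ * (1 - 2*(k:ℝ)*a t + (k:ℝ)^2 * a t)
      ≤ Λ - 2*(k:ℝ)*Λ*a t + (k:ℝ)^2 * q t := by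
    intro t
    have hc : x ⬝ᵥ xt t = a t := by rw [dotProduct_comm]; exact hxtx t
    have hxWxt : x ⬝ᵥ (W *ᵥ xt t) = Λ * a t := by
      rw [hWsymm x (xt t), hWx, dotProduct_smul, hxtx t]; simp
    have h1 := hRay (x - (k:ℝ) • xt t)
    have e1 : (x - (k:ℝ) • xt t) ⬝ᵥ (x - (k:ℝ) • xt t)
        = 1 - 2*(k:ℝ)*a t + (k:ℝ)^2 * a t := by
      simp only [sub_dotProduct, dotProduct_sub, smul_dotProduct,
        dotProduct_smul, smul_eq_mul, hx1, hc, hxtx t, haeq t]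
      ring
    have e2 : (x - (k:ℝ) • xt t) ⬝ᵥ (W *ᵥ (x - (k:ℝ) • xt t))
        = Λ - 2*(k:ℝ)*Λ*a t + (k:ℝ)^2 * q t := by
      rw [Matrix.mulVec_sub, Matrix.mulVec_smul]
      simp only [sub_dotProduct, dotProduct_sub, smul_dotProduct,
        dotProduct_smul, smul_eq_mul, hWx, hxWxt, hxtx t, hx1, hc, hqeq t]
      ring
    rw [e1, e2] at h1
    exact h1
  -- sum over t
  have hsum := Finset.sum_le_sum (fun t (_ : t ∈ Finset.univ) => hper t)
  have hqsum : ∑ t, q t ≤ lam := by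
    calc ∑ t, q t ≤ ∑ t, lam * a t := Finset.sum_le_sum fun t _ => hclustq t
    _ = lam * ∑ t, a t := by rw [Finset.mul_sum]
    _ = lam := by rw [hasum, mul_one]
  have hS1 : ∑ t, μ * (1 - 2*(k:ℝ)*a t + (k:ℝ)^2 * a t)
      = μ * ((k:ℝ) - 2*(k:ℝ) + (k:ℝ)^2) := by
    rw [← Finset.mul_sum]
    congr 1
    simp only [Finset.sum_add_distrib, Finset.sum_sub_distrib, Finset.sum_const,
      Finset.card_univ, Fintype.card_fin, nsmul_eq_mul, ← Finset.mul_sum, hasum]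
    ring
  have hS2 : ∑ t, (Λ - 2*(k:ℝ)*Λ*a t + (k:ℝ)^2 * q t)
      = (k:ℝ)*Λ - 2*(k:ℝ)*Λ + (k:ℝ)^2 * (∑ t, q t) := by
    simp only [Finset.sum_add_distrib, Finset.sum_sub_distrib, Finset.sum_const,
      Finset.card_univ, Fintype.card_fin, nsmul_eq_mul, ← Finset.mul_sum, hasum]
    ring
  rw [hS1, hS2] at hsum
  have hfinal : Λ - μ ≤ (k:ℝ) * (lam - μ) := by
    have hKpos : (0:ℝ) < (k:ℝ) := by linarith
    nlinarith [hsum, hqsum, mul_le_mul_of_nonneg_left hqsum (sq_nonneg (k:ℝ))]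
  have hpos : 0 < lam - μ := by linarith [hlo]
  rw [ge_iff_le, div_le_iff₀ hpos]
  linarith [hfinal]
end

section
/- Every graph G has a ((Δ(G)+1)/2)-vertex cover: the edge set E(G) can be written as ∪_{i∈V(G)} E_i with E_i ⊆ {e : i ∈ e} and |E_i| ≤ (Δ(G)+1)/2 for each vertex i. -/
open Finset

namespace MDVC

variable {n : ℕ} (G : SimpleGraph (Fin n)) [DecidableRel G.Adj]

def Valid (σ : Sym2 (Fin n) → Fin n) : Prop := ∀ e ∈ G.edgeFinset, σ e ∈ e

def Fv (σ : Sym2 (Fin n) → Fin n) (v : Fin n) : Finset (Sym2 (Fin n)) :=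
  G.edgeFinset.filter (fun e => σ e = v)

def outd (σ : Sym2 (Fin n) → Fin n) (v : Fin n) : ℕ := (Fv G σ v).card

def Phi (σ : Sym2 (Fin n) → Fin n) : ℕ := ∑ v, 4 ^ outd G σ v

def Dstep (σ : Sym2 (Fin n) → Fin n) (x y : Fin n) : Prop :=
  G.Adj x y ∧ σ s(x, y) = x

lemma valid_update {σ : Sym2 (Fin n) → Fin n} (hσ : Valid G σ) {v u : Fin n}
    (h : u ∈ s(v, u)) : Valid G (Function.update σ s(v, u) u) := by
  intro e he
  by_cases hev : e = s(v, u)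
  · subst hev; simpa [Function.update] using h
  · simpa [Function.update, hev] using hσ e he

lemma outd_update_self {σ : Sym2 (Fin n) → Fin n} {v u : Fin n}
    (hadj : G.Adj v u) (hσ : σ s(v, u) = v) :
    outd G (Function.update σ s(v, u) u) v + 1 = outd G σ v := by
  have hne : v ≠ u := hadj.ne
  have h1 : Fv G (Function.update σ s(v, u) u) v = (Fv G σ v).erase s(v, u) := by
    ext e
    by_cases hev : e = s(v, u)
    · subst hev; simp [Fv, Function.update, hne.symm]
    · simp [Fv, Function.update, hev]
  have h2 : s(v, u) ∈ Fv G σ v := by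
    simp [Fv, hσ, SimpleGraph.mem_edgeFinset, hadj]
  have h3 : 0 < (Fv G σ v).card := Finset.card_pos.mpr ⟨_, h2⟩
  rw [outd, outd, h1, Finset.card_erase_of_mem h2]
  omega

lemma outd_update_other {σ : Sym2 (Fin n) → Fin n} {v u : Fin n}
    (hadj : G.Adj v u) (hσ : σ s(v, u) = v) :
    outd G (Function.update σ s(v, u) u) u = outd G σ u + 1 := by
  have hne : v ≠ u := hadj.ne
  have h1 : Fv G (Function.update σ s(v, u) u) u = insert s(v, u) (Fv G σ u) := by
    ext e
    by_cases hev : e = s(v, u)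
    · subst hev; simp [Fv, Function.update, SimpleGraph.mem_edgeFinset, hadj]
    · simp [Fv, Function.update, hev]
  have h2 : s(v, u) ∉ Fv G σ u := by
    simp [Fv, hσ, hne]
  rw [outd, outd, h1, Finset.card_insert_of_notMem h2]

lemma outd_update_ne {σ : Sym2 (Fin n) → Fin n} {v u x : Fin n}
    (hσ : σ s(v, u) = v) (hxv : x ≠ v) (hxu : x ≠ u) :
    outd G (Function.update σ s(v, u) u) x = outd G σ x := by
  unfold outd
  congr 1
  ext e
  by_cases hev : e = s(v, u)
  · subst hev
    unfold Fv
    simp only [Finset.mem_filter, Function.update_self, hσ]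
    constructor
    · rintro ⟨-, h⟩; exact absurd h (Ne.symm hxu)
    · rintro ⟨-, h⟩; exact absurd h (Ne.symm hxv)
  · simp [Fv, Function.update, hev]

lemma sum_pair_swap {f g : Fin n → ℕ} {v u : Fin n} (hvu : v ≠ u)
    (h : ∀ x, x ≠ v → x ≠ u → f x = g x) :
    ∑ x, f x + (g v + g u) = ∑ x, g x + (f v + f u) := by
  classical
  have hsub : ({v, u} : Finset (Fin n)) ⊆ Finset.univ := Finset.subset_univ _
  have hf := Finset.sum_sdiff (f := f) hsub
  have hg := Finset.sum_sdiff (f := g) hsub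
  have hfp : ∑ x ∈ ({v, u} : Finset (Fin n)), f x = f v + f u := Finset.sum_pair hvu
  have hgp : ∑ x ∈ ({v, u} : Finset (Fin n)), g x = g v + g u := Finset.sum_pair hvu
  have hmid : ∑ x ∈ Finset.univ \ ({v, u} : Finset (Fin n)), f x
      = ∑ x ∈ Finset.univ \ ({v, u} : Finset (Fin n)), g x := by
    refine Finset.sum_congr rfl fun x hx => ?_
    simp only [Finset.mem_sdiff, Finset.mem_insert, Finset.mem_singleton] at hx
    exact h x (fun hh => hx.2 (Or.inl hh)) (fun hh => hx.2 (Or.inr hh))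
  omega

lemma phi_update {σ : Sym2 (Fin n) → Fin n} {v u : Fin n}
    (hadj : G.Adj v u) (hσ : σ s(v, u) = v) :
    Phi G (Function.update σ s(v, u) u) + 4 ^ outd G σ v + 4 ^ outd G σ u
      = Phi G σ + 4 ^ (outd G σ v - 1) + 4 ^ (outd G σ u + 1) := by
  have hne : v ≠ u := hadj.ne
  have h1 := outd_update_self G hadj hσ
  have h2 := outd_update_other G hadj hσ
  have key := sum_pair_swap (f := fun x => 4 ^ outd G (Function.update σ s(v, u) u) x)
    (g := fun x => 4 ^ outd G σ x) hne
    (fun x hxv hxu => by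
      show (4:ℕ) ^ outd G (Function.update σ s(v, u) u) x = 4 ^ outd G σ x
      rw [outd_update_ne G hσ hxv hxu])
  have hv' : outd G (Function.update σ s(v, u) u) v = outd G σ v - 1 := by omega
  have hu' : outd G (Function.update σ s(v, u) u) u = outd G σ u + 1 := h2
  have key2 : Phi G (Function.update σ s(v, u) u)
        + (4 ^ outd G σ v + 4 ^ outd G σ u)
      = Phi G σ + (4 ^ outd G (Function.update σ s(v, u) u) v
        + 4 ^ outd G (Function.update σ s(v, u) u) u) := key
  rw [hv', hu'] at key2
  omega

lemma mem_Fv_self {σ : Sym2 (Fin n) → Fin n} {v u : Fin n}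
    (hadj : G.Adj v u) (hσ : σ s(v, u) = v) : s(v, u) ∈ Fv G σ v := by
  simp [Fv, hσ, SimpleGraph.mem_edgeFinset, hadj]

lemma step_le {σ : Sym2 (Fin n) → Fin n} (hval : Valid G σ)
    (hmin : ∀ τ, Valid G τ → Phi G σ ≤ Phi G τ) {v u : Fin n}
    (hD : Dstep G σ v u) : outd G σ v ≤ outd G σ u + 1 := by
  by_contra hcon
  push_neg at hcon
  obtain ⟨hadj, hσ⟩ := hD
  have hval' : Valid G (Function.update σ s(v, u) u) :=
    valid_update G hval (by simp)
  have hle := hmin _ hval'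
  have hid := phi_update G hadj hσ
  have ha : 1 ≤ outd G σ v :=
    Finset.card_pos.mpr ⟨_, mem_Fv_self G hadj hσ⟩
  have h4a : (4:ℕ) ^ (outd G σ v - 1) * 4 = 4 ^ outd G σ v := by
    rw [← pow_succ]; congr 1; omega
  have hmono : (4:ℕ) ^ (outd G σ u + 1) ≤ 4 ^ (outd G σ v - 1) :=
    Nat.pow_le_pow_right (by norm_num) (by omega)
  have hpb : 1 ≤ (4:ℕ) ^ outd G σ u := Nat.one_le_pow _ _ (by norm_num)
  have hpa : 1 ≤ (4:ℕ) ^ (outd G σ v - 1) := Nat.one_le_pow _ _ (by norm_num)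
  omega

lemma flip_phi_eq {σ : Sym2 (Fin n) → Fin n} {v u : Fin n}
    (hadj : G.Adj v u) (hσ : σ s(v, u) = v)
    (heq : outd G σ v = outd G σ u + 1) :
    Phi G (Function.update σ s(v, u) u) = Phi G σ := by
  have hid := phi_update G hadj hσ
  have h1 : outd G σ v - 1 = outd G σ u := by omega
  rw [h1, heq] at hid
  omega

lemma chain_congr {α : Type*} {R R' : α → α → Prop} :
    ∀ (l : List α) (x : α), (∀ a b, a ∈ x :: l → b ∈ x :: l → R a b → R' a b) →
    List.Chain R x l → List.Chain R' x l := by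
  intro l
  induction l with
  | nil => intro x _ _; exact List.Chain.nil
  | cons y t ih =>
    intro x h hc
    simp only [List.Chain, List.chain_cons] at hc ⊢
    refine ⟨h x y (by simp) (by simp) hc.1, ?_⟩
    exact ih y (fun a b ha hb => h a b (List.mem_cons_of_mem x ha)
      (List.mem_cons_of_mem x hb)) hc.2

lemma rtg_exists_chain {α : Type*} {R : α → α → Prop} {v w : α}
    (h : Relation.ReflTransGen R v w) :
    ∃ l : List α, List.Chain R v l ∧ (v :: l).getLast (List.cons_ne_nil v l) = w := by
  induction h using Relation.ReflTransGen.head_induction_on with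
  | refl => exact ⟨[], List.Chain.nil, rfl⟩
  | head h' _ ih =>
    obtain ⟨l, hc, hl⟩ := ih
    exact ⟨_ :: l, List.chain_cons.mpr ⟨h', hc⟩,
      by rw [List.getLast_cons (List.cons_ne_nil _ _)]; exact hl⟩

lemma getLast_eq_of_eq {α : Type*} {l₁ l₂ : List α} (h : l₁ = l₂) (h₁ : l₁ ≠ []) :
    l₁.getLast h₁ = l₂.getLast (h ▸ h₁) := by subst h; rfl

lemma key : ∀ (N : ℕ) (l : List (Fin n)) (σ : Sym2 (Fin n) → Fin n),
    Valid G σ → (∀ τ, Valid G τ → Phi G σ ≤ Phi G τ) → l.length ≤ N →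
    ∀ v, List.Chain (Dstep G σ) v l →
    outd G σ v ≤ outd G σ ((v :: l).getLast (List.cons_ne_nil v l)) + 1 := by
  intro N
  induction N with
  | zero =>
    intro l σ _ _ hlen v _
    have hl : l = [] := List.length_eq_zero_iff.mp (Nat.le_zero.mp hlen)
    subst hl; simp
  | succ N ih =>
    intro l σ hval hmin hlen v hc
    match l with
    | [] => simp
    | u :: rest =>
      simp only [List.Chain, List.chain_cons] at hc
      obtain ⟨hD, hcrest⟩ := hc
      have hvu : v ≠ u := hD.1.ne
      have hab : outd G σ v ≤ outd G σ u + 1 := step_le G hval hmin hD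
      rw [List.getLast_cons (List.cons_ne_nil u rest)]
      have hrestlen : rest.length ≤ N := by
        simp only [List.length_cons] at hlen; omega
      have hIH1 := ih rest σ hval hmin hrestlen u hcrest
      by_contra hcon
      push_neg at hcon
      have hab2 : outd G σ v = outd G σ u + 1 := by omega
      by_cases hvrest : v ∈ rest
      · obtain ⟨p, q, hpq⟩ := List.append_of_mem hvrest
        subst hpq
        have hsplit := (List.isChain_cons_split.mp hcrest).2
        have hq : (u :: (p ++ v :: q)).getLast (List.cons_ne_nil _ _)
            = (v :: q).getLast (List.cons_ne_nil v q) := by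
          rw [getLast_eq_of_eq (show u :: (p ++ v :: q) = (u :: p) ++ (v :: q) from rfl),
            List.getLast_append]
          simp
        have hqlen : q.length ≤ N := by
          simp only [List.length_cons, List.length_append] at hlen; omega
        have hIH2 := ih q σ hval hmin hqlen v hsplit
        rw [hq] at hcon
        omega
      · have hu_ne : v ∉ u :: rest := by
          simp only [List.mem_cons]; push_neg; exact ⟨hvu, hvrest⟩
        have hval' : Valid G (Function.update σ s(v, u) u) :=
          valid_update G hval (by simp)
        have hphi : Phi G (Function.update σ s(v, u) u) = Phi G σ :=
          flip_phi_eq G hD.1 hD.2 hab2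
        have hmin' : ∀ τ, Valid G τ → Phi G (Function.update σ s(v, u) u) ≤ Phi G τ :=
          fun τ hτ => hphi ▸ hmin τ hτ
        have hchain' : List.Chain (Dstep G (Function.update σ s(v, u) u)) u rest := by
          refine chain_congr rest u (fun x y hx hy hR => ?_) hcrest
          refine ⟨hR.1, ?_⟩
          have hxv : x ≠ v := fun h => hu_ne (h ▸ hx)
          have hyv : y ≠ v := fun h => hu_ne (h ▸ hy)
          rw [Function.update_of_ne ?_ , hR.2]
          intro hxy
          rw [Sym2.eq_iff] at hxy
          rcases hxy with ⟨h1, _⟩ | ⟨_, h2⟩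
          · exact hxv h1
          · exact hyv h2
        have hout_u : outd G (Function.update σ s(v, u) u) u = outd G σ v := by
          rw [outd_update_other G hD.1 hD.2]; omega
        have hw_mem : (u :: rest).getLast (List.cons_ne_nil u rest) ∈ u :: rest :=
          List.getLast_mem _
        have hwv : (u :: rest).getLast (List.cons_ne_nil u rest) ≠ v :=
          fun h => hu_ne (h ▸ hw_mem)
        have hwu : (u :: rest).getLast (List.cons_ne_nil u rest) ≠ u := by
          intro h
          rw [h] at hcon
          omega
        have hout_w : outd G (Function.update σ s(v, u) u)
              ((u :: rest).getLast (List.cons_ne_nil u rest))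
            = outd G σ ((u :: rest).getLast (List.cons_ne_nil u rest)) :=
          outd_update_ne G hD.2 hwv hwu
        have hIH3 := ih rest (Function.update σ s(v, u) u) hval' hmin' hrestlen u hchain'
        rw [hout_u, hout_w] at hIH3
        omega

lemma reach_le {σ : Sym2 (Fin n) → Fin n} (hval : Valid G σ)
    (hmin : ∀ τ, Valid G τ → Phi G σ ≤ Phi G τ) {v w : Fin n}
    (h : Relation.ReflTransGen (Dstep G σ) v w) :
    outd G σ v ≤ outd G σ w + 1 := by
  obtain ⟨l, hc, hl⟩ := rtg_exists_chain h
  have hk := key G l.length l σ hval hmin le_rfl v hc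
  rwa [hl] at hk

lemma outd_bound {σ : Sym2 (Fin n) → Fin n} (hval : Valid G σ)
    (hmin : ∀ τ, Valid G τ → Phi G σ ≤ Phi G τ) (v : Fin n) :
    2 * outd G σ v ≤ G.maxDegree + 1 := by
  classical
  rcases Nat.eq_zero_or_pos (outd G σ v) with h0 | hm
  · omega
  set S : Finset (Fin n) :=
    Finset.univ.filter (fun w => Relation.ReflTransGen (Dstep G σ) v w) with hSdef
  have hmemS : ∀ w, w ∈ S ↔ Relation.ReflTransGen (Dstep G σ) v w := by
    intro w; simp [hSdef]
  have hvS : v ∈ S := (hmemS v).mpr Relation.ReflTransGen.refl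
  have hS1 : ∀ w ∈ S, outd G σ v ≤ outd G σ w + 1 :=
    fun w hw => reach_le G hval hmin ((hmemS w).mp hw)
  have hclosed : ∀ e ∈ G.edgeFinset, σ e ∈ S → ∀ x, x ∈ e → x ∈ S := by
    intro e he hσe x hx
    by_cases hxσ : x = σ e
    · exact hxσ ▸ hσe
    · have hσmem : σ e ∈ e := hval e he
      have hee : e = s(σ e, x) :=
        (Sym2.mem_and_mem_iff (Ne.symm hxσ)).mp ⟨hσmem, hx⟩
      have hadj : G.Adj (σ e) x := by
        rw [SimpleGraph.mem_edgeFinset, hee, SimpleGraph.mem_edgeSet] at he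
        exact he
      have hstep : Dstep G σ (σ e) x := ⟨hadj, by rw [← hee]⟩
      exact (hmemS x).mpr (Relation.ReflTransGen.tail ((hmemS _).mp hσe) hstep)
  set ES : Finset (Sym2 (Fin n)) := G.edgeFinset.filter (fun e => σ e ∈ S) with hESdef
  have h1 : ES.card = ∑ w ∈ S, outd G σ w := by
    rw [Finset.card_eq_sum_card_fiberwise (s := ES) (f := σ) (t := S)
      (fun e he => Finset.mem_coe.mpr (Finset.mem_filter.mp (Finset.mem_coe.mp he)).2)]
    refine Finset.sum_congr rfl fun w hw => ?_
    congr 1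
    ext e
    simp only [hESdef, Fv, Finset.mem_filter, and_assoc]
    constructor
    · rintro ⟨h1, _, h3⟩; exact ⟨h1, h3⟩
    · rintro ⟨h1, h3⟩; exact ⟨h1, h3 ▸ hw, h3⟩
  have h2 : outd G σ v + (S.card - 1) * (outd G σ v - 1) ≤ ∑ w ∈ S, outd G σ w := by
    rw [← Finset.add_sum_erase _ _ hvS]
    have hle : (S.erase v).card • (outd G σ v - 1) ≤ ∑ w ∈ S.erase v, outd G σ w :=
      Finset.card_nsmul_le_sum _ _ _ (fun w hw => by
        have := hS1 w (Finset.mem_of_mem_erase hw); omega)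
    rw [Finset.card_erase_of_mem hvS] at hle
    simpa [smul_eq_mul] using Nat.add_le_add_left hle (outd G σ v)
  have h3 : 2 * ES.card ≤ ∑ w ∈ S, G.degree w := by
    have hstep1 : ∑ w ∈ S, (ES.filter (fun e => w ∈ e)).card
        = ∑ e ∈ ES, (S.filter (fun w => w ∈ e)).card := by
      simp only [Finset.card_filter]
      exact Finset.sum_comm
    have hstep2 : ∀ e ∈ ES, (S.filter (fun w => w ∈ e)).card = 2 := by
      intro e he
      obtain ⟨heE, heS⟩ := Finset.mem_filter.mp he
      induction e with
      | _ a b =>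
        have hab : a ≠ b := by
          rw [SimpleGraph.mem_edgeFinset, SimpleGraph.mem_edgeSet] at heE
          exact heE.ne
        have haS : a ∈ S := hclosed _ heE heS a (by simp)
        have hbS : b ∈ S := hclosed _ heE heS b (by simp)
        have : S.filter (fun w => w ∈ s(a, b)) = {a, b} := by
          ext x
          simp only [Finset.mem_filter, Sym2.mem_iff, Finset.mem_insert,
            Finset.mem_singleton]
          constructor
          · rintro ⟨_, h⟩; exact h
          · rintro (h | h)
            · exact ⟨h ▸ haS, Or.inl h⟩
            · exact ⟨h ▸ hbS, Or.inr h⟩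
        rw [this, Finset.card_pair hab]
    have hstep3 : ∑ e ∈ ES, (S.filter (fun w => w ∈ e)).card = 2 * ES.card := by
      rw [Finset.sum_congr rfl hstep2, Finset.sum_const, smul_eq_mul, mul_comm]
    have hstep4 : ∀ w ∈ S, (ES.filter (fun e => w ∈ e)).card ≤ G.degree w := by
      intro w _
      rw [← SimpleGraph.card_incidenceFinset_eq_degree,
        SimpleGraph.incidenceFinset_eq_filter]
      exact Finset.card_le_card (Finset.filter_subset_filter _
        (Finset.filter_subset _ _))
    calc 2 * ES.card = ∑ w ∈ S, (ES.filter (fun e => w ∈ e)).card := by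
          rw [hstep1, hstep3]
      _ ≤ ∑ w ∈ S, G.degree w := Finset.sum_le_sum hstep4
  have h4 : ∑ w ∈ S, G.degree w ≤ S.card * G.maxDegree := by
    have := Finset.card_nsmul_le_sum S (fun w => G.maxDegree - G.degree w)
      0 (fun _ _ => Nat.zero_le _)
    calc ∑ w ∈ S, G.degree w ≤ ∑ _w ∈ S, G.maxDegree :=
          Finset.sum_le_sum (fun w _ => G.degree_le_maxDegree w)
      _ = S.card * G.maxDegree := by rw [Finset.sum_const, smul_eq_mul]
  have hk : 1 ≤ S.card := Finset.card_pos.mpr ⟨v, hvS⟩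
  -- combine
  set m := outd G σ v
  set k := S.card
  set D := G.maxDegree
  have hcomb : 2 * (m + (k - 1) * (m - 1)) ≤ k * D := by
    calc 2 * (m + (k - 1) * (m - 1)) ≤ 2 * ∑ w ∈ S, outd G σ w :=
          Nat.mul_le_mul_left 2 h2
      _ = 2 * ES.card := by rw [h1]
      _ ≤ ∑ w ∈ S, G.degree w := h3
      _ ≤ k * D := h4
  by_contra hcon
  push_neg at hcon
  -- D + 1 < 2 * m, i.e. D ≤ 2 * m - 2 = 2 * (m - 1)
  have hD : D ≤ 2 * (m - 1) := by omega
  have : k * D ≤ k * (2 * (m - 1)) := Nat.mul_le_mul_left k hD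
  have hexp : k * (2 * (m - 1)) = 2 * ((k - 1) * (m - 1)) + 2 * (m - 1) := by
    cases' Nat.exists_eq_add_of_le hk with k' hk'
    rw [hk']
    have h1k : 1 + k' - 1 = k' := by omega
    rw [h1k]
    ring
  omega

end MDVC

open Finset in
theorem max_degree_vertex_cover (n : ℕ) (G : SimpleGraph (Fin n))
    [DecidableRel G.Adj] :
    ∃ F : Fin n → Finset (Sym2 (Fin n)),
      (∀ v, ∀ e ∈ F v, e ∈ G.edgeSet ∧ v ∈ e) ∧
      (∀ v, ((F v).card : ℝ) ≤ ((G.maxDegree : ℝ) + 1) / 2) ∧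
      (∀ e ∈ G.edgeSet, ∃ v, e ∈ F v) := by
  classical
  have hne : (Finset.univ.filter (MDVC.Valid G)).Nonempty := by
    refine ⟨fun e => (Quot.out e).1, Finset.mem_filter.mpr ⟨Finset.mem_univ _, ?_⟩⟩
    intro e _
    exact Sym2.out_fst_mem e
  obtain ⟨σ, hσmem, hσmin⟩ := Finset.exists_min_image
    (Finset.univ.filter (MDVC.Valid G)) (MDVC.Phi G) hne
  have hval : MDVC.Valid G σ := (Finset.mem_filter.mp hσmem).2
  have hmin : ∀ τ, MDVC.Valid G τ → MDVC.Phi G σ ≤ MDVC.Phi G τ :=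
    fun τ hτ => hσmin τ (Finset.mem_filter.mpr ⟨Finset.mem_univ _, hτ⟩)
  refine ⟨MDVC.Fv G σ, ?_, ?_, ?_⟩
  · intro v e he
    obtain ⟨h1, h2⟩ := Finset.mem_filter.mp he
    exact ⟨SimpleGraph.mem_edgeFinset.mp h1, h2 ▸ hval e h1⟩
  · intro v
    have hb := MDVC.outd_bound G hval hmin v
    have hc : ((MDVC.Fv G σ v).card : ℝ) = (MDVC.outd G σ v : ℝ) := rfl
    rw [hc]
    have h2 : (2 * MDVC.outd G σ v : ℝ) ≤ (G.maxDegree : ℝ) + 1 := by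
      exact_mod_cast hb
    linarith
  · intro e he
    exact ⟨σ e, Finset.mem_filter.mpr ⟨SimpleGraph.mem_edgeFinset.mpr he, rfl⟩⟩
end

section
/- Let G be a d-regular graph with at least one edge, adjacency matrix A, and least eigenvalue λ_n. Then χ(G) ≥ (d − λ_n)/(−λ_n) = 1 − d/λ_n. -/
open scoped Matrix

private lemma rayleigh_min (n : ℕ) (A : Matrix (Fin n) (Fin n) ℝ) (hA : A.IsHermitian) (c : ℝ)
    (hcle : ∀ i, c ≤ hA.eigenvalues i) :
    ∀ v : Fin n → ℝ, c * (v ⬝ᵥ v) ≤ v ⬝ᵥ (A *ᵥ v) := by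
  have hB : (A - c • (1 : Matrix (Fin n) (Fin n) ℝ)).PosSemidef := by
    have hsp := hA.spectral_theorem
    rw [Unitary.conjStarAlgAut_apply, Matrix.star_eq_conjTranspose] at hsp
    set U : Matrix (Fin n) (Fin n) ℝ := (hA.eigenvectorUnitary : Matrix (Fin n) (Fin n) ℝ) with hUdef
    have hU : U * Uᴴ = 1 := by
      simpa [Matrix.star_eq_conjTranspose] using
        Matrix.mem_unitaryGroup_iff.mp hA.eigenvectorUnitary.2
    have key : A - c • 1 = U * Matrix.diagonal (fun i => hA.eigenvalues i - c) * Uᴴ := by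
      have h1 : Matrix.diagonal (fun i => hA.eigenvalues i - c)
          = Matrix.diagonal (RCLike.ofReal ∘ hA.eigenvalues) - c • (1 : Matrix (Fin n) (Fin n) ℝ) := by
        rw [Matrix.smul_one_eq_diagonal, ← Matrix.diagonal_sub]
        rfl
      rw [h1, Matrix.mul_sub, Matrix.sub_mul, ← hsp]
      congr 1
      rw [Matrix.mul_smul, Matrix.smul_mul, Matrix.mul_one, hU]
    rw [key]
    exact (Matrix.posSemidef_diagonal_iff.mpr
      (fun i => sub_nonneg.mpr (hcle i))).mul_mul_conjTranspose_same U
  intro v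
  have h0 := hB.dotProduct_mulVec_nonneg v
  simp only [Matrix.sub_mulVec, Matrix.smul_mulVec, Matrix.one_mulVec,
    dotProduct_sub, dotProduct_smul, star_trivial, smul_eq_mul] at h0
  linarith

open Finset in
theorem hoffman_bound_regular (n d : ℕ) (G : SimpleGraph (Fin n))
    [DecidableRel G.Adj] (hreg : G.IsRegularOfDegree d)
    (hE : ∃ i j, G.Adj i j)
    (hA : (G.adjMatrix ℝ).IsHermitian) :
    (G.chromaticNumber.toNat : ℝ) ≥
      ((d : ℝ) - ⨅ i, hA.eigenvalues i) / (-(⨅ i, hA.eigenvalues i)) := by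
  obtain ⟨i0, j0, hij⟩ := hE
  set A : Matrix (Fin n) (Fin n) ℝ := G.adjMatrix ℝ with hAdef
  set c : ℝ := ⨅ i, hA.eigenvalues i with hc
  have hcle : ∀ i, c ≤ hA.eigenvalues i := fun i =>
    ciInf_le (Set.finite_range _).bddBelow i
  have ray := rayleigh_min n A hA c hcle
  -- c ≤ -1
  have hcneg : c ≤ -1 := by
    have hne : i0 ≠ j0 := G.ne_of_adj hij
    have h := ray (Pi.single i0 1 - Pi.single j0 1)
    have hvv : (Pi.single i0 1 - Pi.single j0 1) ⬝ᵥ (Pi.single i0 1 - Pi.single j0 1) = (2:ℝ) := by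
      simp [sub_dotProduct, dotProduct_sub, single_dotProduct,
        dotProduct_single, Pi.single_apply, hne, hne.symm]
      norm_num
    have hAvv : (Pi.single i0 1 - Pi.single j0 1) ⬝ᵥ (A *ᵥ (Pi.single i0 1 - Pi.single j0 1)) = (-2:ℝ) := by
      simp [Matrix.mulVec_sub, Matrix.mulVec_single, sub_dotProduct,
        dotProduct_sub, single_dotProduct, hAdef,
        SimpleGraph.adjMatrix_apply, hij, hij.symm, hne]
      norm_num
    rw [hvv, hAvv] at h
    linarith
  -- the coloring
  set k : ℕ := G.chromaticNumber.toNat with hk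
  obtain ⟨C⟩ := G.colorable_chromaticNumber_of_fintype
  have hkpos : 0 < k := Fin.pos (C i0)
  have hnpos : 0 < n := Fin.pos i0
  -- vectors
  set x : Fin n → ℝ := Function.const _ 1 with hx
  set e : Fin k → Fin n → ℝ := fun s u => if C u = s then 1 else 0 with he
  set m : Fin k → ℝ := fun s => ∑ u, e s u with hm
  have hAx : A *ᵥ x = Function.const _ (d : ℝ) := by
    funext u
    rw [hx, hAdef, SimpleGraph.adjMatrix_mulVec_const_apply_of_regular hreg, mul_one]
    rfl
  have hxAx : x ⬝ᵥ (A *ᵥ x) = (d : ℝ) * n := by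
    rw [hAx]
    simp [dotProduct, hx, mul_comm]
  have heAx : ∀ s, e s ⬝ᵥ (A *ᵥ x) = (d : ℝ) * m s := by
    intro s
    rw [hAx]
    simp only [dotProduct, Function.const_apply, hm]
    rw [← Finset.sum_mul]
    ring
  have hxAe : ∀ s, x ⬝ᵥ (A *ᵥ e s) = (d : ℝ) * m s := by
    intro s
    rw [Matrix.dotProduct_mulVec]
    have hsym : Aᵀ = A := G.isSymm_adjMatrix
    have : x ᵥ* A = A *ᵥ x := by
      conv_lhs => rw [← hsym]
      rw [Matrix.vecMul_transpose]
    rw [this, hAx]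
    simp [dotProduct, hm, Finset.mul_sum]
  have heAe : ∀ s, e s ⬝ᵥ (A *ᵥ e s) = 0 := by
    intro s
    simp only [dotProduct, Matrix.mulVec]
    apply Finset.sum_eq_zero
    intro u _
    by_cases hu : C u = s
    · rw [mul_comm]
      apply mul_eq_zero_of_left
      apply Finset.sum_eq_zero
      intro w _
      by_cases hw : C w = s
      · have : ¬ G.Adj u w := by
          intro hadj
          exact C.valid hadj (hu.trans hw.symm)
        simp [hAdef, SimpleGraph.adjMatrix_apply, this]
      · simp [he, hw]
    · simp [he, hu]
  have hxx : x ⬝ᵥ x = (n : ℝ) := by simp [dotProduct, hx]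
  have hxe : ∀ s, x ⬝ᵥ e s = m s := by intro s; simp [dotProduct, hx, hm]
  have hex : ∀ s, e s ⬝ᵥ x = m s := by intro s; simp [dotProduct, hx, hm]
  have hee : ∀ s, e s ⬝ᵥ e s = m s := by
    intro s
    simp only [dotProduct, hm, he]
    apply Finset.sum_congr rfl
    intro u _
    by_cases hu : C u = s <;> simp [hu]
  have hsumm : ∑ s, m s = (n : ℝ) := by
    simp only [hm, he]
    rw [Finset.sum_comm]
    simp
  -- per-class inequality
  have key : ∀ s, c * ((n : ℝ) - 2 * k * m s + k^2 * m s) ≤ (d : ℝ) * n - 2 * k * ((d:ℝ) * m s) := by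
    intro s
    have h := ray (x - (k : ℝ) • e s)
    rw [Matrix.mulVec_sub, Matrix.mulVec_smul] at h
    simp only [sub_dotProduct, dotProduct_sub, smul_dotProduct,
      dotProduct_smul, smul_eq_mul] at h
    rw [hxAx, hxAe s, heAx s, heAe s, hxx, hxe s, hex s, hee s] at h
    nlinarith [h]
  have hsum := Finset.sum_le_sum (fun s (_ : s ∈ Finset.univ) => key s)
  have hL : ∑ s : Fin k, (c * ((n : ℝ) - 2 * k * m s + k^2 * m s))
      = c * ((k:ℝ)*n - 2*k*n + k^2*n) := by
    rw [← Finset.mul_sum]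
    congr 1
    rw [Finset.sum_add_distrib, Finset.sum_sub_distrib, Finset.sum_const,
      Finset.card_univ, Fintype.card_fin, nsmul_eq_mul,
      ← Finset.mul_sum, ← Finset.mul_sum, hsumm]
  have hR : ∑ s : Fin k, ((d:ℝ) * n - 2 * k * ((d:ℝ) * m s))
      = (k:ℝ)*((d:ℝ)*n) - 2*(k:ℝ)*((d:ℝ)*n) := by
    have h2 : ∀ s : Fin k, 2 * (k:ℝ) * ((d:ℝ) * m s) = (2*(k:ℝ)*(d:ℝ)) * m s :=
      fun s => by ring
    simp_rw [h2]
    rw [Finset.sum_sub_distrib, Finset.sum_const, Finset.card_univ, Fintype.card_fin,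
      nsmul_eq_mul, ← Finset.mul_sum, hsumm]
    ring
  rw [hL, hR] at hsum
  have hKr : (0:ℝ) < k := Nat.cast_pos.mpr hkpos
  have hNr : (0:ℝ) < n := Nat.cast_pos.mpr hnpos
  have hKN : (0:ℝ) < (k:ℝ) * n := mul_pos hKr hNr
  have h9 : (k:ℝ) * (n:ℝ) * (c * ((k:ℝ) - 1) + d) ≤ 0 := by nlinarith [hsum]
  have h10 : c * ((k:ℝ) - 1) + (d:ℝ) ≤ 0 := by
    by_contra hcon
    push_neg at hcon
    nlinarith [mul_pos hKN hcon]
  rw [ge_iff_le, div_le_iff₀ (by linarith : (0:ℝ) < -c)]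
  linarith
end

section
/- Let G be a graph whose vertices are partitioned into k ≥ 2 independent sets (i.e., G is k-colorable), let W be a real symmetric matrix supported on the edges of G, W ≠ 0, with largest eigenvalue λ_1 and least eigenvalue λ_n. Then k ≥ 1 − λ_1/λ_n. -/
open Finset Matrix

variable {n : ℕ}

lemma whb_spectral (W : Matrix (Fin n) (Fin n) ℝ) (hW : W.IsHermitian) :
    W = (hW.eigenvectorUnitary : Matrix (Fin n) (Fin n) ℝ) * diagonal hW.eigenvalues *
      (hW.eigenvectorUnitary : Matrix (Fin n) (Fin n) ℝ)ᵀ := by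
  have h := hW.spectral_theorem
  simpa [Matrix.star_eq_conjTranspose, conjTranspose_eq_transpose_of_trivial,
    RCLike.ofReal_real_eq_id] using h

lemma whb_rayleigh [Nonempty (Fin n)] (W : Matrix (Fin n) (Fin n) ℝ) (hW : W.IsHermitian)
    (y : Fin n → ℝ) :
    (⨅ i, hW.eigenvalues i) * (y ⬝ᵥ y) ≤ y ⬝ᵥ (W *ᵥ y) := by
  set U : Matrix (Fin n) (Fin n) ℝ := (hW.eigenvectorUnitary : Matrix (Fin n) (Fin n) ℝ) with hUdef
  have hU1 : U * Uᵀ = 1 := by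
    have := (Matrix.mem_unitaryGroup_iff).mp hW.eigenvectorUnitary.2
    simpa [Matrix.star_eq_conjTranspose, conjTranspose_eq_transpose_of_trivial] using this
  have hU2 : Uᵀ * U = 1 := by
    have := (Matrix.mem_unitaryGroup_iff').mp hW.eigenvectorUnitary.2
    simpa [Matrix.star_eq_conjTranspose, conjTranspose_eq_transpose_of_trivial] using this
  set c : Fin n → ℝ := Uᵀ *ᵥ y with hcdef
  have hkey : y ⬝ᵥ (W *ᵥ y) = ∑ i, hW.eigenvalues i * (c i * c i) := by
    conv_lhs => rw [whb_spectral W hW]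
    rw [← mulVec_mulVec, ← mulVec_mulVec, dotProduct_mulVec y U, ← mulVec_transpose, ← hcdef]
    simp [dotProduct, mulVec_diagonal]
    ring_nf
    exact Finset.sum_congr rfl fun i _ => by ring
  have hnorm : y ⬝ᵥ y = ∑ i, c i * c i := by
    have : (∑ i, c i * c i) = c ⬝ᵥ c := rfl
    rw [this, hcdef, mulVec_transpose, ← dotProduct_mulVec, ← mulVec_transpose, mulVec_mulVec,
      hU1, one_mulVec]
  rw [hkey, hnorm, Finset.mul_sum]
  refine Finset.sum_le_sum fun i _ => ?_
  exact mul_le_mul_of_nonneg_right (ciInf_le (Finite.bddBelow_range _) i) (mul_self_nonneg _)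

lemma whb_trace (W : Matrix (Fin n) (Fin n) ℝ) (hW : W.IsHermitian) :
    W.trace = ∑ i, hW.eigenvalues i := by
  conv_lhs => rw [whb_spectral W hW]
  have hU2 : ((hW.eigenvectorUnitary : Matrix (Fin n) (Fin n) ℝ))ᵀ *
      (hW.eigenvectorUnitary : Matrix (Fin n) (Fin n) ℝ) = 1 := by
    have := (Matrix.mem_unitaryGroup_iff').mp hW.eigenvectorUnitary.2
    simpa [Matrix.star_eq_conjTranspose, conjTranspose_eq_transpose_of_trivial] using this
  rw [Matrix.trace_mul_cycle, hU2, one_mul, Matrix.trace_diagonal]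

lemma whb_inf_neg [Nonempty (Fin n)] (W : Matrix (Fin n) (Fin n) ℝ) (hW : W.IsHermitian)
    (hW0 : W ≠ 0) (hdiag : ∀ i, W i i = 0) : (⨅ i, hW.eigenvalues i) < 0 := by
  by_contra h
  push_neg at h
  have htr0 : W.trace = 0 := by
    simp only [Matrix.trace, Matrix.diag]
    exact Finset.sum_eq_zero fun i _ => hdiag i
  have hnn : ∀ i, 0 ≤ hW.eigenvalues i :=
    fun i => h.trans (ciInf_le (Finite.bddBelow_range _) i)
  have hall : ∀ i, hW.eigenvalues i = 0 := by
    intro i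
    have hsum0 : ∑ i, hW.eigenvalues i = 0 := by rw [← whb_trace W hW, htr0]
    exact (Finset.sum_eq_zero_iff_of_nonneg (fun i _ => hnn i)).mp hsum0 i (Finset.mem_univ i)
  apply hW0
  rw [whb_spectral W hW]
  have : (diagonal hW.eigenvalues) = 0 := by
    rw [show hW.eigenvalues = 0 from funext hall]; exact diagonal_zero
  rw [this, mul_zero, zero_mul]

open Finset in
theorem weighted_hoffman_bound (n k : ℕ) (hk : 2 ≤ k)
    (G : SimpleGraph (Fin n)) (φ : Fin n → Fin k)
    (hindep : ∀ i j, G.Adj i j → φ i ≠ φ j)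
    (W : Matrix (Fin n) (Fin n) ℝ) (hW0 : W ≠ 0) (hW : W.IsHermitian)
    (hsupp : ∀ i j, ¬ G.Adj i j → W i j = 0) :
    (k : ℝ) ≥ 1 - (⨆ i, hW.eigenvalues i) / (⨅ i, hW.eigenvalues i) := by
  have hn : n ≠ 0 := by
    rintro rfl
    exact hW0 (Subsingleton.elim _ _)
  haveI : Nonempty (Fin n) := ⟨⟨0, Nat.pos_of_ne_zero hn⟩⟩
  haveI : Nonempty (Fin k) := ⟨⟨0, by omega⟩⟩
  set μ : Fin n → ℝ := hW.eigenvalues with hμdef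
  set l1 : ℝ := ⨆ i, μ i with hl1def
  set ln : ℝ := ⨅ i, μ i with hlndef
  have hln : ln < 0 := whb_inf_neg W hW hW0 (fun i => hsupp i i (G.loopless.irrefl i))
  -- eigenvector for the top eigenvalue
  obtain ⟨i0, -, hi0⟩ := Finset.exists_max_image (univ : Finset (Fin n)) μ univ_nonempty
  have hl1 : l1 = μ i0 :=
    le_antisymm (ciSup_le fun j => hi0 j (mem_univ j)) (le_ciSup (Finite.bddAbove_range μ) i0)
  set v : Fin n → ℝ := ⇑(hW.eigenvectorBasis i0) with hvdef
  have hv : W *ᵥ v = l1 • v := by rw [hl1]; exact hW.mulVec_eigenvectorBasis i0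
  have hvv : v ⬝ᵥ v = 1 := by
    have h1 : ‖hW.eigenvectorBasis i0‖ = 1 := hW.eigenvectorBasis.orthonormal.1 i0
    have h2 : (v ⬝ᵥ v) = @inner ℝ _ _ (hW.eigenvectorBasis i0) (hW.eigenvectorBasis i0) := by
      simp only [dotProduct, PiLp.inner_apply, RCLike.inner_apply, conj_trivial]
      exact Finset.sum_congr rfl fun i _ => rfl
    rw [h2, real_inner_self_eq_norm_mul_norm, h1, one_mul]
  -- restriction to color classes
  set x : Fin k → Fin n → ℝ := fun c i => if φ i = c then v i else 0 with hxdef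
  set t : Fin k → ℝ := fun c => x c ⬝ᵥ x c with htdef
  have hxv : ∀ c, x c ⬝ᵥ v = t c := by
    intro c
    refine Finset.sum_congr rfl fun i _ => ?_
    by_cases h : φ i = c <;> simp [hxdef, h]
  have hsumt : ∑ c, t c = 1 := by
    rw [← hvv]
    have : ∀ c, t c = ∑ i, if φ i = c then v i * v i else 0 := by
      intro c
      refine Finset.sum_congr rfl fun i _ => ?_
      by_cases h : φ i = c <;> simp [hxdef, h]
    simp only [this]
    rw [Finset.sum_comm]
    refine Finset.sum_congr rfl fun i _ => ?_
    simp [dotProduct]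
  have hq0 : ∀ c, x c ⬝ᵥ (W *ᵥ x c) = 0 := by
    intro c
    simp only [dotProduct, mulVec, dotProduct]
    refine Finset.sum_eq_zero fun i _ => ?_
    by_cases hi : φ i = c
    · refine mul_eq_zero_of_right _ (Finset.sum_eq_zero fun j _ => ?_)
      by_cases hj : φ j = c
      · have : ¬ G.Adj i j := fun hadj => hindep i j hadj (hi.trans hj.symm)
        simp [hsupp i j this]
      · simp [hxdef, hj]
    · simp [hxdef, hi]
  have hxWv : ∀ c, x c ⬝ᵥ (W *ᵥ v) = l1 * t c := by
    intro c
    rw [hv, dotProduct_smul, smul_eq_mul, hxv]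
  have hvWx : ∀ c, v ⬝ᵥ (W *ᵥ x c) = l1 * t c := by
    intro c
    have hsym : W.vecMul v = W *ᵥ v := by
      rw [← Matrix.mulVec_transpose]
      rw [← conjTranspose_eq_transpose_of_trivial, hW.eq]
    rw [Matrix.dotProduct_mulVec, hsym, hv, smul_dotProduct, smul_eq_mul, dotProduct_comm, hxv]
  set y : Fin k → Fin n → ℝ := fun c => v - (k : ℝ) • x c with hydef
  have hqy : ∀ c, y c ⬝ᵥ (W *ᵥ y c) = l1 - 2 * k * l1 * t c := by
    intro c
    have hvWv : v ⬝ᵥ (W *ᵥ v) = l1 := by rw [hv, dotProduct_smul, smul_eq_mul, hvv, mul_one]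
    simp only [hydef, Matrix.mulVec_sub, Matrix.mulVec_smul, sub_dotProduct,
      dotProduct_sub, smul_dotProduct, dotProduct_smul, smul_eq_mul]
    rw [hvWv, hxWv c, hvWx c, hq0 c]
    ring
  have hyy : ∀ c, y c ⬝ᵥ y c = 1 - 2 * k * t c + k * k * t c := by
    intro c
    simp only [hydef, sub_dotProduct, dotProduct_sub, smul_dotProduct,
      dotProduct_smul, smul_eq_mul]
    rw [hvv, dotProduct_comm v (x c), hxv c, show x c ⬝ᵥ x c = t c from rfl]
    ring
  have hineq : ∀ c, ln * (y c ⬝ᵥ y c) ≤ y c ⬝ᵥ (W *ᵥ y c) := fun c => whb_rayleigh W hW (y c)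
  have hsum : ∑ c, ln * (1 - 2 * k * t c + k * k * t c) ≤ ∑ c, (l1 - 2 * k * l1 * t c) := by
    refine Finset.sum_le_sum fun c _ => ?_
    rw [← hqy c, ← hyy c]
    exact hineq c
  have hA : ∑ c, (l1 - 2 * (k:ℝ) * l1 * t c) = k * l1 - 2 * k * l1 := by
    rw [Finset.sum_sub_distrib, Finset.sum_const, ← Finset.mul_sum, hsumt, card_univ,
      Fintype.card_fin, nsmul_eq_mul, mul_one]
  have hB : ∑ c, ln * (1 - 2 * (k:ℝ) * t c + k * k * t c) = ln * (k - 2 * k + k * k) := by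
    rw [← Finset.mul_sum]
    rw [Finset.sum_add_distrib, Finset.sum_sub_distrib, Finset.sum_const, ← Finset.mul_sum,
      ← Finset.mul_sum, hsumt, card_univ, Fintype.card_fin, nsmul_eq_mul]
    ring
  rw [hA, hB] at hsum
  have hk2 : (2:ℝ) ≤ (k:ℝ) := by exact_mod_cast hk
  have h9 : ln * ((k:ℝ) - 1) ≤ -l1 := by nlinarith
  have h10 : (1:ℝ) - k ≤ l1 / ln := by
    rw [le_div_iff_of_neg hln]
    nlinarith
  linarith
end

section
/- Let G be a graph with at least one edge and adjacency matrix A with least eigenvalue λ_n. If unit vectors u_1,...,u_n ∈ ℝ^n satisfy ⟨u_i,u_j⟩ ≤ −1/(k−1) for every edge (i,j) of G (for some real k > 1), and α is an eigenvector of A for its largest eigenvalue λ_1, then λ_n ≤ −λ_1/(k−1). -/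
open Matrix

open Matrix in
lemma my_diag_quad {m : Type*} [Fintype m] [DecidableEq m] (e y : m → ℝ) :
    y ⬝ᵥ (diagonal e *ᵥ y) = ∑ i, e i * y i ^ 2 := by
  simp only [dotProduct, mulVec_diagonal]
  exact Finset.sum_congr rfl fun i _ => by ring

open Matrix in
lemma my_rayleigh_low {m : Type*} [Fintype m] [DecidableEq m] [Nonempty m]
    (A : Matrix m m ℝ) (hA : A.IsHermitian) (x : m → ℝ) :
    (⨅ i, hA.eigenvalues i) * (∑ i, x i ^ 2) ≤ x ⬝ᵥ A.mulVec x := by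
  set U : Matrix m m ℝ := (Matrix.IsHermitian.eigenvectorUnitary hA : Matrix m m ℝ) with hUdef
  have hU : U * star U = 1 := (Matrix.mem_unitaryGroup_iff).mp (Matrix.IsHermitian.eigenvectorUnitary hA).2
  set y : m → ℝ := (star U).mulVec x with hy
  have hvm : vecMul x U = y := by
    rw [hy, Matrix.star_eq_conjTranspose, conjTranspose_eq_transpose_of_trivial,
      mulVec_transpose]
  have hxy : x ⬝ᵥ A.mulVec x = ∑ i, hA.eigenvalues i * y i ^ 2 := by
    conv_lhs => rw [hA.spectral_theorem, Unitary.conjStarAlgAut_apply]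
    rw [← mulVec_mulVec, ← mulVec_mulVec, dotProduct_mulVec x U, hvm, ← hy]
    have : (RCLike.ofReal ∘ hA.eigenvalues : m → ℝ) = hA.eigenvalues := by
      ext i; simp
    rw [this, my_diag_quad]
  have hnorm : ∑ i, y i ^ 2 = ∑ i, x i ^ 2 := by
    have hyy : y ⬝ᵥ y = x ⬝ᵥ x := by
      calc y ⬝ᵥ y = (star U *ᵥ x) ⬝ᵥ (star U *ᵥ x) := rfl
        _ = ((star U *ᵥ x) ᵥ* star U) ⬝ᵥ x := dotProduct_mulVec _ _ _
        _ = ((star U)ᵀ *ᵥ (star U *ᵥ x)) ⬝ᵥ x := by rw [mulVec_transpose]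
        _ = (((star U)ᵀ * star U) *ᵥ x) ⬝ᵥ x := by rw [mulVec_mulVec]
        _ = x ⬝ᵥ x := by
            rw [Matrix.star_eq_conjTranspose, conjTranspose_eq_transpose_of_trivial,
              transpose_transpose,
              show Uᵀ = star U by
                rw [Matrix.star_eq_conjTranspose, conjTranspose_eq_transpose_of_trivial],
              hU, one_mulVec]
    simpa [dotProduct, sq] using hyy
  rw [hxy, ← hnorm, Finset.mul_sum]
  apply Finset.sum_le_sum
  intro i _
  exact mul_le_mul_of_nonneg_right (ciInf_le (Finite.bddBelow_range _) i) (sq_nonneg _)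

open Finset in
theorem vector_coloring_eigenvector_inequality (n : ℕ) (G : SimpleGraph (Fin n))
    [DecidableRel G.Adj] (hE : ∃ i j, G.Adj i j)
    (hA : (G.adjMatrix ℝ).IsHermitian)
    (k : ℝ) (hk : 1 < k) (u : Fin n → (Fin n → ℝ))
    (hu : ∀ i, ∑ l, (u i l) ^ 2 = 1)
    (hedge : ∀ i j, G.Adj i j → ∑ l, u i l * u j l ≤ -1 / (k - 1))
    (α : Fin n → ℝ) (hα : α ≠ 0)
    (heig : (G.adjMatrix ℝ).mulVec α = (⨆ i, hA.eigenvalues i) • α) :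
    (⨅ i, hA.eigenvalues i) ≤ -(⨆ i, hA.eigenvalues i) / (k - 1) := by
  obtain ⟨i0, j0, hadj⟩ := hE
  haveI : Nonempty (Fin n) := ⟨i0⟩
  set A := G.adjMatrix ℝ with hAdef
  set l1 := ⨆ i, hA.eigenvalues i with hl1
  set ln := ⨅ i, hA.eigenvalues i with hln
  set β : Fin n → ℝ := fun i => |α i| with hβ
  set S := ∑ i, α i ^ 2 with hS
  have hk1 : 0 < k - 1 := by linarith
  have hSpos : 0 < S := by
    obtain ⟨i, hi⟩ := Function.ne_iff.mp hα
    exact Finset.sum_pos' (fun j _ => sq_nonneg _)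
      ⟨i, Finset.mem_univ i, pow_two_pos_of_ne_zero hi⟩
  have hquad : ∀ x : Fin n → ℝ,
      x ⬝ᵥ A.mulVec x = ∑ i, ∑ j, A i j * x i * x j := by
    intro x
    simp only [dotProduct, Matrix.mulVec, Finset.mul_sum]
    exact Finset.sum_congr rfl fun i _ => Finset.sum_congr rfl fun j _ => by ring
  have hAnn : ∀ i j, (0:ℝ) ≤ A i j := fun i j => by
    simp [hAdef, SimpleGraph.adjMatrix_apply]; split <;> norm_num
  -- T := quadratic form at β bounds l1 * S from above
  have hT : l1 * S ≤ ∑ i, ∑ j, A i j * β i * β j := by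
    have h1 : α ⬝ᵥ A.mulVec α = l1 * S := by
      rw [heig]
      simp only [dotProduct, Pi.smul_apply, smul_eq_mul, hS, Finset.mul_sum]
      exact Finset.sum_congr rfl fun i _ => by ring
    rw [← h1, hquad]
    apply Finset.sum_le_sum; intro i _
    apply Finset.sum_le_sum; intro j _
    have : α i * α j ≤ β i * β j := by
      rw [hβ]; calc α i * α j ≤ |α i * α j| := le_abs_self _
        _ = |α i| * |α j| := abs_mul _ _
    calc A i j * α i * α j = A i j * (α i * α j) := by ring
      _ ≤ A i j * (β i * β j) := mul_le_mul_of_nonneg_left this (hAnn i j)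
      _ = A i j * β i * β j := by ring
  -- Rayleigh: ln * S ≤ sum over coordinates of quad forms
  have hRay : ln * S ≤ ∑ i, ∑ j, A i j * β i * β j * (∑ l, u i l * u j l) := by
    have hsum : ∑ l, (fun i => β i * u i l) ⬝ᵥ A.mulVec (fun i => β i * u i l)
        = ∑ i, ∑ j, A i j * β i * β j * (∑ l, u i l * u j l) := by
      simp only [hquad, Finset.mul_sum]
      rw [Finset.sum_comm]
      apply Finset.sum_congr rfl; intro i _
      rw [Finset.sum_comm]
      apply Finset.sum_congr rfl; intro j _
      apply Finset.sum_congr rfl; intro l _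
      ring
    rw [← hsum]
    have hnorm : ∑ l, ∑ i, (β i * u i l) ^ 2 = S := by
      rw [Finset.sum_comm, hS]
      apply Finset.sum_congr rfl; intro i _
      have : ∑ l, (β i * u i l) ^ 2 = β i ^ 2 * ∑ l, u i l ^ 2 := by
        rw [Finset.mul_sum]
        exact Finset.sum_congr rfl fun l _ => by ring
      rw [this, hu i, mul_one, hβ, sq_abs]
    calc ln * S = ∑ l, ln * ∑ i, (β i * u i l) ^ 2 := by
          rw [← Finset.mul_sum, hnorm]
      _ ≤ _ := Finset.sum_le_sum fun l _ => my_rayleigh_low A hA _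
  -- edge bound
  have hEdgeB : ∑ i, ∑ j, A i j * β i * β j * (∑ l, u i l * u j l)
      ≤ (-1 / (k - 1)) * ∑ i, ∑ j, A i j * β i * β j := by
    rw [Finset.mul_sum]
    apply Finset.sum_le_sum; intro i _
    rw [Finset.mul_sum]
    apply Finset.sum_le_sum; intro j _
    by_cases hij : G.Adj i j
    · have hc : (0:ℝ) ≤ A i j * β i * β j := by
        apply mul_nonneg (mul_nonneg (hAnn i j) (abs_nonneg _)) (abs_nonneg _)
      calc A i j * β i * β j * (∑ l, u i l * u j l)
          ≤ A i j * β i * β j * (-1 / (k - 1)) :=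
            mul_le_mul_of_nonneg_left (hedge i j hij) hc
        _ = -1 / (k - 1) * (A i j * β i * β j) := by ring
    · have : A i j = 0 := by simp [hAdef, SimpleGraph.adjMatrix_apply, hij]
      simp [this]
  -- combine
  have hfinal : ln * S ≤ (-l1 / (k - 1)) * S := by
    have hneg : (-1 / (k - 1) : ℝ) ≤ 0 := by
      apply div_nonpos_of_nonpos_of_nonneg <;> linarith
    calc ln * S ≤ (-1 / (k - 1)) * ∑ i, ∑ j, A i j * β i * β j :=
          le_trans hRay hEdgeB
      _ ≤ (-1 / (k - 1)) * (l1 * S) := mul_le_mul_of_nonpos_left hT hneg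
      _ = (-l1 / (k - 1)) * S := by ring
  exact le_of_mul_le_mul_right (by exact hfinal) hSpos
end
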